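/- Every well-filtered T0 space is a monotone convergence space (d-space): every directed subset D (with respect to the specialization order) has a supremum, and D converges as a net to its supremum. -/
import Mathlib


open Set

/-- The specialization order of the paper: `x ≤ y` iff `x ∈ cl {y}`. -/
def specLE {X : Type*} [TopologicalSpace X] (x y : X) : Prop := x ∈ closure ({y} : Set X)

/-- Upward closure `↑A` w.r.t. the specialization order. -/
def upSet {X : Type*} [TopologicalSpace X] (A : Set X) : Set X := {y | ∃ x ∈ A, specLE x y}

/-- Downward closure `↓A` w.r.t. the specialization order. -/
def downSet {X : Type*} [TopologicalSpace X] (A : Set X) : Set X := {y | ∃ x ∈ A, specLE y x}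

/-- The saturation of a set: the intersection of all open sets containing it. -/
def sat {X : Type*} [TopologicalSpace X] (A : Set X) : Set X := ⋂₀ {U | IsOpen U ∧ A ⊆ U}

/-- A `T0` space is well-filtered if for every filtered family `𝓕` of compact saturated
sets and every open `U` with `⋂₀ 𝓕 ⊆ U`, some member of `𝓕` is contained in `U`. -/
def WellFilteredSpace (X : Type*) [TopologicalSpace X] : Prop :=
  ∀ 𝓕 : Set (Set X), 𝓕.Nonempty →
    (∀ K ∈ 𝓕, IsCompact K ∧ sat K = K) →
    (∀ K₁ ∈ 𝓕, ∀ K₂ ∈ 𝓕, ∃ K₃ ∈ 𝓕, K₃ ⊆ K₁ ∩ K₂) →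
    ∀ U : Set X, IsOpen U → ⋂₀ 𝓕 ⊆ U → ∃ K ∈ 𝓕, K ⊆ U

lemma specLE_trans' {X : Type*} [TopologicalSpace X] {a b c : X}
    (h1 : specLE a b) (h2 : specLE b c) : specLE a c :=
  closure_minimal (singleton_subset_iff.2 h2) isClosed_closure h1

lemma mem_sat_singleton' {X : Type*} [TopologicalSpace X] {d y : X} :
    y ∈ sat ({d} : Set X) ↔ specLE d y := by
  constructor
  · intro h
    rw [specLE, mem_closure_iff]
    intro U hU hdU
    exact ⟨y, h U ⟨hU, singleton_subset_iff.2 hdU⟩, rfl⟩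
  · rintro h U ⟨hU, hdU⟩
    rcases mem_closure_iff.1 h U hU (hdU rfl) with ⟨z, hzU, hz⟩
    rwa [mem_singleton_iff.1 hz] at hzU

lemma subset_sat' {X : Type*} [TopologicalSpace X] (A : Set X) : A ⊆ sat A :=
  fun _ hx U hU => hU.2 hx

lemma sat_sat' {X : Type*} [TopologicalSpace X] (A : Set X) : sat (sat A) = sat A := by
  apply Subset.antisymm
  · intro y hy U hU
    exact hy U ⟨hU.1, fun z hz => hz U hU⟩
  · exact subset_sat' _

lemma isCompact_sat_singleton' {X : Type*} [TopologicalSpace X] (d : X) :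
    IsCompact (sat ({d} : Set X)) := by
  rw [isCompact_iff_finite_subcover]
  intro ι U hU hcov
  obtain ⟨i, hi⟩ := mem_iUnion.1 (hcov (subset_sat' _ rfl))
  refine ⟨{i}, fun y hy => mem_iUnion.2 ⟨i, ?_⟩⟩
  have := hy (U i) ⟨hU i, singleton_subset_iff.2 hi⟩
  simpa using this

theorem stmt15 {X : Type*} [TopologicalSpace X] [T0Space X]
    (hwf : WellFilteredSpace X) (D : Set X) (hDne : D.Nonempty)
    (hdir : DirectedOn specLE D) :
    ∃ s : X, (∀ d ∈ D, specLE d s) ∧ (∀ b : X, (∀ d ∈ D, specLE d b) → specLE s b) ∧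
      (∀ U : Set X, IsOpen U → s ∈ U → ∃ d ∈ D, ∀ d' ∈ D, specLE d d' → d' ∈ U) := by
  set 𝓕 : Set (Set X) := (fun d => sat {d}) '' D with h𝓕
  have hmem : ∀ d ∈ D, sat ({d} : Set X) ∈ 𝓕 := fun d hd => ⟨d, hd, rfl⟩
  have hself : ∀ d : X, d ∈ sat ({d} : Set X) := fun d => subset_sat' _ rfl
  have hne : 𝓕.Nonempty := hDne.image _
  have hcs : ∀ K ∈ 𝓕, IsCompact K ∧ sat K = K := by
    rintro K ⟨d, hd, rfl⟩
    exact ⟨isCompact_sat_singleton' d, sat_sat' _⟩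
  have hfil : ∀ K₁ ∈ 𝓕, ∀ K₂ ∈ 𝓕, ∃ K₃ ∈ 𝓕, K₃ ⊆ K₁ ∩ K₂ := by
    rintro _ ⟨d₁, hd₁, rfl⟩ _ ⟨d₂, hd₂, rfl⟩
    obtain ⟨d₃, hd₃, h13, h23⟩ := hdir d₁ hd₁ d₂ hd₂
    refine ⟨sat {d₃}, hmem d₃ hd₃, fun y hy => ?_⟩
    rw [mem_sat_singleton'] at hy
    exact ⟨mem_sat_singleton'.2 (specLE_trans' h13 hy),
      mem_sat_singleton'.2 (specLE_trans' h23 hy)⟩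
  have key : (⋂₀ 𝓕 ∩ closure D).Nonempty := by
    by_contra h
    rw [not_nonempty_iff_eq_empty] at h
    have hsub : ⋂₀ 𝓕 ⊆ (closure D)ᶜ := fun x hx hxc =>
      eq_empty_iff_forall_notMem.1 h x ⟨hx, hxc⟩
    obtain ⟨K, hK, hKU⟩ := hwf 𝓕 hne hcs hfil _ isClosed_closure.isOpen_compl hsub
    obtain ⟨d, hd, rfl⟩ := hK
    exact hKU (hself d) (subset_closure hd)
  obtain ⟨s, hsK, hscl⟩ := key
  have hub : ∀ d ∈ D, specLE d s := fun d hd =>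
    mem_sat_singleton'.1 (hsK _ (hmem d hd))
  refine ⟨s, hub, ?_, ?_⟩
  · intro b hb
    exact closure_minimal (fun d hd => hb d hd) isClosed_closure hscl
  · intro U hU hsU
    obtain ⟨z, hzU, hzD⟩ := mem_closure_iff.1 hscl U hU hsU
    refine ⟨z, hzD, fun d' _ hle => ?_⟩
    obtain ⟨w, hwU, hw⟩ := mem_closure_iff.1 hle U hU hzU
    rwa [mem_singleton_iff.1 hw] at hwU
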